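/- Let k be a field of characteristic p > 0 and let (c^r)_{r≥0} be d×d matrices over k, all but finitely many zero, with c^0 = 1 and c^r c^s = C(r+s,r) c^{r+s} for all r,s. Set X_i = c^{p^i}. Then for every r with base-p expansion r = r_0 + r_1 p + ... + r_m p^m, one has c^r = (r_0! ··· r_m!)^{−1} X_0^{r_0} ··· X_m^{r_m}. -/

import Mathlib

section
variable {k : Type*} [Field k] {p d : ℕ} [hp : Fact p.Prime] [CharP k p]

lemma powA (c : ℕ → Matrix (Fin d) (Fin d) k)
    (hrel : ∀ r s, c r * c s = ((r + s).choose r : k) • c (r + s)) (h0 : c 0 = 1) :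
    ∀ n, (c 1) ^ n = (n.factorial : k) • c n := by
  intro n
  induction n with
  | zero => simp [h0]
  | succ j ih =>
      rw [pow_succ, ih, smul_mul_assoc, hrel j 1, Nat.choose_succ_self_right,
        Nat.factorial_succ, smul_smul]
      push_cast
      ring_nf

lemma fact_ne_zero {a : ℕ} (ha : a < p) : ((a.factorial : k)) ≠ 0 := by
  rw [Ne, CharP.cast_eq_zero_iff k p]
  exact fun h => absurd (hp.out.dvd_factorial.mp h) (Nat.not_le.mpr ha)

lemma auxMain : ∀ m (c : ℕ → Matrix (Fin d) (Fin d) k), c 0 = 1 →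
    (∀ r s, c r * c s = ((r + s).choose r : k) • c (r + s)) →
    ∀ r, r < p ^ (m + 1) →
      c r = (∏ i ∈ Finset.range (m + 1), ((r / p ^ i % p).factorial : k))⁻¹ •
        ((List.range (m + 1)).map (fun i => c (p ^ i) ^ (r / p ^ i % p))).prod := by
  intro m
  induction m with
  | zero =>
      intro c h0 hrel r hr
      rw [pow_one] at hr
      have hl : List.range 1 = [0] := rfl
      simp only [zero_add, Finset.range_one, Finset.prod_singleton, hl, List.map_cons,
        List.map_nil, List.prod_cons, List.prod_nil, pow_zero, Nat.div_one, mul_one,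
        Nat.mod_eq_of_lt hr]
      rw [powA c hrel h0 r, smul_smul, inv_mul_cancel₀ (fact_ne_zero hr), one_smul]
  | succ m ih =>
      intro c h0 hrel r hr
      set a := r % p with ha
      set s := r / p with hs
      have hap : a < p := Nat.mod_lt _ hp.out.pos
      have hsm : s < p ^ (m + 1) := by
        rw [hs, Nat.div_lt_iff_lt_mul hp.out.pos, ← pow_succ]
        exact hr
      have hras : r = a + p * s := by rw [ha, hs, Nat.mod_add_div]
      have lucas1 : ((a + p * s).choose a : k) = 1 := by
        have hmod := (Choose.choose_modEq_choose_mod_mul_choose_div_nat (p := p)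
          (n := a + p * s) (k := a))
        have h3 : a % p = a := Nat.mod_eq_of_lt hap
        have h4 : a / p = 0 := Nat.div_eq_of_lt hap
        have h1 : (a + p * s) % p = a := by
          rw [Nat.add_mul_mod_self_left, h3]
        have h2 : (a + p * s) / p = s := by
          rw [Nat.add_mul_div_left _ _ hp.out.pos, h4, Nat.zero_add]
        rw [h1, h2, h3, h4, Nat.choose_self, Nat.choose_zero_right, mul_one] at hmod
        calc ((a + p * s).choose a : k) = ((1 : ℕ) : k) :=
              CharP.natCast_eq_natCast' k p hmod
          _ = 1 := Nat.cast_one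
      have step1 : c r = c a * c (p * s) := by
        rw [hrel a (p * s), lucas1, one_smul, ← hras]
      have hrel' : ∀ u v, c (p * u) * c (p * v) = (((u + v).choose u : ℕ) : k) • c (p * (u + v)) := by
        intro u v
        have hmain := hrel (p * u) (p * v)
        have hl : ((p * u + p * v).choose (p * u) : k) = (((u + v).choose u : ℕ) : k) := by
          apply CharP.natCast_eq_natCast' k p
          have hmod := (Choose.choose_modEq_choose_mod_mul_choose_div_nat (p := p)
            (n := p * u + p * v) (k := p * u))
          have h1 : (p * u + p * v) % p = 0 := by
            rw [← Nat.mul_add, Nat.mul_mod_right]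
          have h2 : (p * u + p * v) / p = u + v := by
            rw [← Nat.mul_add, Nat.mul_div_cancel_left _ hp.out.pos]
          have h3 : (p * u) % p = 0 := Nat.mul_mod_right p u
          have h4 : (p * u) / p = u := Nat.mul_div_cancel_left u hp.out.pos
          rw [h1, h2, h3, h4, Nat.choose_self, one_mul] at hmod
          exact hmod
        rw [hmain, hl, ← Nat.mul_add]
      have ihs := ih (fun n => c (p * n)) (by simpa using h0)
        (fun u v => by simpa using hrel' u v) s hsm
      try simp only at ihs
      have hdig0 : r / p ^ 0 % p = a := by simp [ha]
      have hdig : ∀ i, r / p ^ (i + 1) % p = s / p ^ i % p := by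
        intro i
        rw [hs, pow_succ', Nat.div_div_eq_div_mul]
      have hca : c a = ((a.factorial : k))⁻¹ • (c 1) ^ a := by
        rw [powA c hrel h0 a, smul_smul, inv_mul_cancel₀ (fact_ne_zero hap), one_smul]
      have hprod : (∏ i ∈ Finset.range (m + 1 + 1), ((r / p ^ i % p).factorial : k))
          = (a.factorial : k) * ∏ i ∈ Finset.range (m + 1), ((s / p ^ i % p).factorial : k) := by
        rw [Finset.prod_range_succ', hdig0, mul_comm]
        congr 1
        exact Finset.prod_congr rfl fun i _ => by rw [hdig i]
      have hlist : ((List.range (m + 1 + 1)).map (fun i => c (p ^ i) ^ (r / p ^ i % p))).prod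
          = c 1 ^ a *
            ((List.range (m + 1)).map (fun i => c (p * p ^ i) ^ (s / p ^ i % p))).prod := by
        rw [List.range_succ_eq_map, List.map_cons, List.prod_cons, List.map_map]
        congr 1
        · simp only [pow_zero, Nat.div_one, ← ha]
        · congr 1
          apply List.map_congr_left
          intro i _
          simp only [Function.comp_apply, Nat.succ_eq_add_one, hdig i]
          rw [pow_succ']
      rw [step1, hca, ihs, smul_mul_smul_comm, hprod, hlist, mul_inv]

end

theorem stmt_13 {k : Type*} [Field k] {p d : ℕ} [hp : Fact p.Prime] [CharP k p]
    (c : ℕ → Matrix (Fin d) (Fin d) k)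
    (hfin : ∃ N, ∀ r > N, c r = 0)
    (h0 : c 0 = 1)
    (hrel : ∀ r s, c r * c s = ((r + s).choose r : k) • c (r + s)) :
    ∀ r m, r < p ^ (m + 1) →
      c r = (∏ i ∈ Finset.range (m + 1), ((r / p ^ i % p).factorial : k))⁻¹ •
        ((List.range (m + 1)).map (fun i => c (p ^ i) ^ (r / p ^ i % p))).prod := by
  intro r m hr
  exact auxMain m c h0 hrel r hr
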